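/- Let K be a positive semidefinite bounded linear operator on H with Moore–Penrose pseudoinverse P, and let F = (f_1,…,f_N) be a Parseval K-frame for H. Each ⟨f_i, P f_i⟩ is a nonnegative real number; set M = max_{1≤i≤N} ⟨f_i, P f_i⟩, J₁ = { i : ⟨f_i, P f_i⟩ = M }, W₁ = span{ f_i : i ∈ J₁ } and W₂ = span{ f_i : i ∉ J₁ }. If W₁ ∩ W₂ = {0}, then every K-dual G = (g_1,…,g_N) of F satisfies max_{1≤i≤N} |⟨f_i, g_i⟩| ≥ M (so the canonical K-dual is spectrally optimal for one erasure). -/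

import Mathlib

open scoped ComplexOrder

local notation "⟪" x ", " y "⟫" => @inner ℂ _ _ x y

/-- Let `K` be positive semidefinite with Moore–Penrose pseudoinverse `P` and
`F` a Parseval `K`-frame.  Each `⟨f_i, P f_i⟩` is a nonnegative real; with
`M = max_i ⟨f_i, P f_i⟩`, `J₁` the set of maximizing indices, `W₁ = span{f_i : i ∈ J₁}`,
`W₂ = span{f_i : i ∉ J₁}`: if `W₁ ∩ W₂ = {0}` then every `K`-dual `G` of `F` satisfies
`max_i |⟨f_i, g_i⟩| ≥ M`.
(The paper's `⟨f, g⟩` is linear in the first slot, so `⟨f_i, P f_i⟩` is Mathlib's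
`⟪P f_i, f_i⟫` and `⟨f_i, g_i⟩` is `⟪g_i, f_i⟫`.) -/
theorem stmt16
    {H : Type*} [NormedAddCommGroup H] [InnerProductSpace ℂ H] [FiniteDimensional ℂ H]
    (hdim : 1 ≤ Module.finrank ℂ H)
    {N : ℕ} (hN : 1 ≤ N)
    (K P : H →L[ℂ] H) (hK : ∀ f : H, 0 ≤ ⟪K f, f⟫)
    (hP1 : K ∘L P ∘L K = K) (hP2 : P ∘L K ∘L P = P)
    (hP3 : IsSelfAdjoint (K ∘L P)) (hP4 : IsSelfAdjoint (P ∘L K))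
    (F : Fin N → H)
    (hParseval : ∀ f : H,
      ∑ i, ‖⟪F i, f⟫‖ ^ 2 = ‖ContinuousLinearMap.adjoint K f‖ ^ 2)
    (M : ℝ) (hM : M = ⨆ i, (⟪P (F i), F i⟫).re)
    (hW : Submodule.span ℂ (F '' {i | (⟪P (F i), F i⟫).re = M}) ⊓
          Submodule.span ℂ (F '' {i | (⟪P (F i), F i⟫).re ≠ M}) = ⊥) :
    (∀ i, 0 ≤ ⟪P (F i), F i⟫) ∧
    (∀ G : Fin N → H, (∀ f : H, K f = ∑ i, ⟪G i, f⟫ • F i) →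
      M ≤ ⨆ i, ‖⟪G i, F i⟫‖) := by
  classical
  -- K is self-adjoint
  have hKsa : IsSelfAdjoint K := by
    rw [ContinuousLinearMap.isSelfAdjoint_iff_isSymmetric,
      LinearMap.isSymmetric_iff_inner_map_self_real]
    intro v
    have h := hK v
    rw [Complex.le_def] at h
    exact Complex.conj_eq_iff_im.mpr h.2.symm
  -- P is self-adjoint (uniqueness-style argument for the Moore–Penrose inverse)
  have hP1' : K * (P * K) = K := hP1
  have hP2' : P * (K * P) = P := hP2
  have hqk : star P * K = K * P := by
    have h3 : star (K * P) = K * P := hP3.star_eq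
    rwa [star_mul, hKsa.star_eq] at h3
  have hkq : K * star P = P * K := by
    have h4 : star (P * K) = P * K := hP4.star_eq
    rwa [star_mul, hKsa.star_eq] at h4
  have hq1 : K * (star P * K) = K := by
    have h := congrArg star hP1'
    rwa [star_mul, star_mul, hKsa.star_eq, mul_assoc] at h
  have e1 : K * star P = (K * P) * (K * star P) := by
    conv_lhs => rw [← hP1']
    simp only [mul_assoc]
  have e2 : K * P = (K * star P) * (K * P) := by
    conv_lhs => rw [← hq1]
    simp only [mul_assoc]
  have e1s : K * star P = (K * star P) * (K * P) := by
    have h := congrArg star e1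
    rw [star_mul (K * P), star_mul, star_mul, star_star, hKsa.star_eq] at h
    rwa [hqk, ← hkq] at h
  have hKPq : K * P = K * star P := by rw [e2, ← e1s]
  have hstarP : star P = P :=
    calc star P = star P * (K * star P) := by
          have h := congrArg star hP2'
          rw [star_mul, star_mul, hKsa.star_eq, mul_assoc] at h
          exact h.symm
    _ = star P * (K * P) := by rw [hKPq]
    _ = (star P * K) * P := by rw [mul_assoc]
    _ = (K * P) * P := by rw [hqk]
    _ = (K * star P) * P := by rw [hKPq]
    _ = (P * K) * P := by rw [hkq]
    _ = P * (K * P) := by rw [mul_assoc]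
    _ = P := hP2'
  have hcomm : K * P = P * K := by rw [hKPq, hkq]
  -- inner product identities
  have hKadj : ContinuousLinearMap.adjoint K = K := by
    rw [← ContinuousLinearMap.star_eq_adjoint]; exact hKsa.star_eq
  have hPadj : ContinuousLinearMap.adjoint P = P := by
    rw [← ContinuousLinearMap.star_eq_adjoint]; exact hstarP
  have hKinner : ∀ x y : H, ⟪K x, y⟫ = ⟪x, K y⟫ := by
    intro x y
    conv_lhs => rw [← hKadj]
    exact ContinuousLinearMap.adjoint_inner_left K y x
  have hPinner : ∀ x y : H, ⟪P x, y⟫ = ⟪x, P y⟫ := by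
    intro x y
    conv_lhs => rw [← hPadj]
    exact ContinuousLinearMap.adjoint_inner_left P y x
  -- positivity of P
  have hPpos : ∀ f : H, 0 ≤ ⟪P f, f⟫ := by
    intro f
    have h2 : P (K (P f)) = P f := DFunLike.congr_fun hP2' f
    calc (0 : ℂ) ≤ ⟪K (P f), P f⟫ := hK (P f)
    _ = ⟪P (K (P f)), f⟫ := (hPinner (K (P f)) f).symm
    _ = ⟪P f, f⟫ := by rw [h2]
  -- the frame operator equals K ∘ K
  set S : H →L[ℂ] H := ∑ i, (innerSL ℂ (F i)).smulRight (F i) with hSdef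
  have hSapply : ∀ f : H, S f = ∑ i, ⟪F i, f⟫ • F i := by
    intro f
    simp [hSdef, ContinuousLinearMap.sum_apply]
  have hSeq : (S : H →ₗ[ℂ] H) = ((K ∘L K : H →L[ℂ] H) : H →ₗ[ℂ] H) := by
    rw [← ext_inner_map]
    intro x
    have lhs : ⟪S x, x⟫ = ((∑ i, ‖⟪F i, x⟫‖ ^ 2 : ℝ) : ℂ) := by
      rw [hSapply, sum_inner]
      push_cast
      refine Finset.sum_congr rfl fun i _ => ?_
      rw [inner_smul_left, mul_comm, Complex.mul_conj, ← Complex.sq_norm]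
      push_cast; ring
    have rhs : ⟪K (K x), x⟫ = ((‖ContinuousLinearMap.adjoint K x‖ ^ 2 : ℝ) : ℂ) := by
      rw [hKadj, hKinner, inner_self_eq_norm_sq_to_K]
      norm_cast
    show ⟪S x, x⟫ = ⟪K (K x), x⟫
    rw [lhs, rhs, hParseval x]
  have hSKK : ∀ f : H, (∑ i, ⟪F i, f⟫ • F i) = K (K f) := by
    intro f
    have h := LinearMap.congr_fun hSeq f
    rw [← hSapply f]
    exact h
  -- the canonical dual property
  have hKKP : K * (K * P) = K := by rw [hcomm]; exact hP1'
  have hcanon : ∀ f : H, (∑ i, ⟪P (F i), f⟫ • F i) = K f := by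
    intro f
    have h := DFunLike.congr_fun hKKP f
    calc (∑ i, ⟪P (F i), f⟫ • F i) = ∑ i, ⟪F i, P f⟫ • F i := by
          refine Finset.sum_congr rfl fun i _ => ?_
          rw [hPinner]
    _ = K (K (P f)) := hSKK (P f)
    _ = K f := h
  refine ⟨fun i => hPpos (F i), ?_⟩
  intro G hG
  -- the difference with the canonical dual is a "zero dual"
  have h0 : ∀ f : H, (∑ i, ⟪G i - P (F i), f⟫ • F i) = 0 := by
    intro f
    simp only [inner_sub_left, sub_smul]
    rw [Finset.sum_sub_distrib, ← hG f, hcanon f, sub_self]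
  set Jf : Finset (Fin N) := Finset.univ.filter (fun i => (⟪P (F i), F i⟫).re = M)
    with hJf
  -- splitting via the span condition
  have hsplit : ∀ f : H, (∑ i ∈ Jf, ⟪G i - P (F i), f⟫ • F i) = 0 := by
    intro f
    have hmem1 : (∑ i ∈ Jf, ⟪G i - P (F i), f⟫ • F i) ∈
        Submodule.span ℂ (F '' {i | (⟪P (F i), F i⟫).re = M}) := by
      refine Submodule.sum_mem _ fun i hi => Submodule.smul_mem _ _ ?_
      exact Submodule.subset_span ⟨i, (Finset.mem_filter.mp hi).2, rfl⟩
    have hmem2 : (∑ i ∈ Finset.univ.filter (fun i => ¬ ((⟪P (F i), F i⟫).re = M)),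
        ⟪G i - P (F i), f⟫ • F i) ∈
        Submodule.span ℂ (F '' {i | (⟪P (F i), F i⟫).re ≠ M}) := by
      refine Submodule.sum_mem _ fun i hi => Submodule.smul_mem _ _ ?_
      exact Submodule.subset_span ⟨i, (Finset.mem_filter.mp hi).2, rfl⟩
    have hadd : (∑ i ∈ Jf, ⟪G i - P (F i), f⟫ • F i) +
        (∑ i ∈ Finset.univ.filter (fun i => ¬ ((⟪P (F i), F i⟫).re = M)),
          ⟪G i - P (F i), f⟫ • F i) = 0 := by
      rw [hJf, Finset.sum_filter_add_sum_filter_not]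
      exact h0 f
    have hneg : (∑ i ∈ Jf, ⟪G i - P (F i), f⟫ • F i) =
        -(∑ i ∈ Finset.univ.filter (fun i => ¬ ((⟪P (F i), F i⟫).re = M)),
          ⟪G i - P (F i), f⟫ • F i) := eq_neg_of_add_eq_zero_left hadd
    have hin : (∑ i ∈ Jf, ⟪G i - P (F i), f⟫ • F i) ∈
        Submodule.span ℂ (F '' {i | (⟪P (F i), F i⟫).re = M}) ⊓
        Submodule.span ℂ (F '' {i | (⟪P (F i), F i⟫).re ≠ M}) := by
      refine ⟨hmem1, ?_⟩
      rw [hneg]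
      exact neg_mem hmem2
    rw [hW, Submodule.mem_bot] at hin
    exact hin
  -- trace argument: sum of diagonal inner products over Jf vanishes
  have htrace : (∑ i ∈ Jf, ⟪G i - P (F i), F i⟫) = 0 := by
    set b := stdOrthonormalBasis ℂ H with hb
    have hexp : ∀ x y : H, ⟪x, y⟫ = ∑ k, ⟪b k, y⟫ * ⟪x, b k⟫ := by
      intro x y
      conv_lhs => rw [← b.sum_repr' y]
      rw [inner_sum]
      refine Finset.sum_congr rfl fun k _ => ?_
      rw [inner_smul_right]
    calc (∑ i ∈ Jf, ⟪G i - P (F i), F i⟫)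
        = ∑ i ∈ Jf, ∑ k, ⟪b k, F i⟫ * ⟪G i - P (F i), b k⟫ :=
          Finset.sum_congr rfl fun i _ => hexp _ _
    _ = ∑ k, ∑ i ∈ Jf, ⟪b k, F i⟫ * ⟪G i - P (F i), b k⟫ := Finset.sum_comm
    _ = ∑ k, ⟪b k, ∑ i ∈ Jf, ⟪G i - P (F i), b k⟫ • F i⟫ := by
          refine Finset.sum_congr rfl fun k _ => ?_
          rw [inner_sum]
          refine Finset.sum_congr rfl fun i _ => ?_
          rw [inner_smul_right]; ring
    _ = 0 := by
          simp only [hsplit, inner_zero_right, Finset.sum_const_zero]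
  -- values on Jf
  have hvals : ∀ i ∈ Jf, ⟪P (F i), F i⟫ = (M : ℂ) := by
    intro i hi
    have him := hPpos (F i)
    rw [Complex.le_def] at him
    have hre := (Finset.mem_filter.mp hi).2
    apply Complex.ext
    · simpa using hre
    · simpa using him.2.symm
  have hsum : (∑ i ∈ Jf, ⟪G i, F i⟫) = (Jf.card : ℂ) * (M : ℂ) := by
    have h2 : (∑ i ∈ Jf, ⟪G i, F i⟫) = ∑ i ∈ Jf, ⟪P (F i), F i⟫ := by
      rw [← sub_eq_zero, ← Finset.sum_sub_distrib]
      simpa [inner_sub_left] using htrace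
    rw [h2, Finset.sum_congr rfl hvals, Finset.sum_const, nsmul_eq_mul]
  -- Jf is nonempty and M ≥ 0
  have hNe : Nonempty (Fin N) := ⟨⟨0, hN⟩⟩
  obtain ⟨j, hj⟩ := exists_eq_ciSup_of_finite (f := fun i : Fin N => (⟪P (F i), F i⟫).re)
  rw [← hM] at hj
  have hjJf : j ∈ Jf := Finset.mem_filter.mpr ⟨Finset.mem_univ j, hj⟩
  have hcard : 0 < Jf.card := Finset.card_pos.mpr ⟨j, hjJf⟩
  have hM0 : 0 ≤ M := by
    rw [← hj]
    have := (Complex.le_def.mp (hPpos (F j))).1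
    simpa using this
  -- final estimate
  have habs : ‖∑ i ∈ Jf, ⟪G i, F i⟫‖ = (Jf.card : ℝ) * M := by
    rw [hsum, norm_mul, Complex.norm_natCast, Complex.norm_real, Real.norm_eq_abs, abs_of_nonneg hM0]
  have hle : ‖∑ i ∈ Jf, ⟪G i, F i⟫‖ ≤ ∑ i ∈ Jf, ‖⟪G i, F i⟫‖ :=
    norm_sum_le _ _
  have hbdd : BddAbove (Set.range fun i => ‖⟪G i, F i⟫‖) :=
    Set.Finite.bddAbove (Set.finite_range _)
  have hle2 : (∑ i ∈ Jf, ‖⟪G i, F i⟫‖) ≤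
      ∑ _i ∈ Jf, (⨆ i, ‖⟪G i, F i⟫‖) :=
    Finset.sum_le_sum fun i _ => le_ciSup hbdd i
  rw [Finset.sum_const, nsmul_eq_mul] at hle2
  have hfin : (Jf.card : ℝ) * M ≤ (Jf.card : ℝ) * ⨆ i, ‖⟪G i, F i⟫‖ := by
    rw [← habs]
    exact hle.trans hle2
  exact (mul_le_mul_iff_right₀ (by exact_mod_cast hcard)).mp hfin
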